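/- Let q = 2^e with e ≥ 1 and e ≢ 0 (mod 3), and set n = q² + q + 1. Then 7 divides n, and there exists a difference set D ⊆ ℤ/nℤ containing the three elements 0, n/7 and 3n/7 (where n/7 and 3n/7 are the integers n/7 and 3n/7 viewed in ℤ/nℤ). -/

import Mathlib

set_option linter.unusedSectionVars false
set_option maxHeartbeats 1000000

/-- A subset `D` of `ℤ/mℤ` is a difference set if every nonzero element `a` can be written
in exactly one way as `a = d₁ − d₂` with `d₁, d₂ ∈ D`. -/
def IsDifferenceSet {m : ℕ} (D : Set (ZMod m)) : Prop :=
  ∀ a : ZMod m, a ≠ 0 → ∃! p : ZMod m × ZMod m, p.1 ∈ D ∧ p.2 ∈ D ∧ p.1 - p.2 = a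

namespace SingerAux

def Tr (q : ℕ) {F : Type} [Field F] (x : F) : F := x + x ^ q + x ^ q ^ 2

section Lemmas
variable {F : Type} [Field F] [Fintype F] [CharP F 2]

lemma Tr_add (e q : ℕ) (hq : q = 2 ^ e) (x y : F) : Tr q (x + y) = Tr q x + Tr q y := by
  have h1 : (x + y) ^ q = x ^ q + y ^ q := by
    rw [hq]; exact add_pow_char_pow ..
  have h2 : (x + y) ^ q ^ 2 = x ^ q ^ 2 + y ^ q ^ 2 := by
    have h : q ^ 2 = 2 ^ (e * 2) := by rw [hq, ← pow_mul]
    rw [h]; exact add_pow_char_pow ..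
  simp only [Tr, h1, h2]; ring

lemma Tr_smul (q : ℕ) (lam x : F) (hl : lam ^ q = lam) : Tr q (lam * x) = lam * Tr q x := by
  have h2 : lam ^ q ^ 2 = lam := by rw [pow_two, pow_mul, hl, hl]
  simp only [Tr, mul_pow, hl, h2]; ring

lemma Tr_fixed (e q : ℕ) (hq : q = 2 ^ e) (hcard : Fintype.card F = q ^ 3) (x : F) :
    (Tr q x) ^ q = Tr q x := by
  have h1 : ∀ a b : F, (a + b) ^ q = a ^ q + b ^ q := by
    intro a b; rw [hq]; exact add_pow_char_pow ..
  have h3 : x ^ q ^ 3 = x := by rw [← hcard]; exact FiniteField.pow_card x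
  simp only [Tr, h1]
  have e1 : (x ^ q) ^ q = x ^ q ^ 2 := by rw [← pow_mul, pow_two]
  have e2 : (x ^ q ^ 2) ^ q = x := by rw [← pow_mul, ← pow_succ]; exact h3
  rw [e1, e2]; ring

lemma Tr_zero (q : ℕ) (hq0 : q ≠ 0) : Tr q (0 : F) = 0 := by
  simp [Tr, zero_pow hq0, zero_pow (pow_ne_zero 2 hq0)]

lemma frob_inj (e q : ℕ) (hq : q = 2 ^ e) (x y : F) (h : x ^ q = y ^ q) : x = y := by
  have h0 : (x - y) ^ q = 0 := by
    rw [hq, sub_pow_char_pow]; rw [hq] at h; rw [h, sub_self]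
  have hq0 : q ≠ 0 := by rw [hq]; positivity
  exact sub_eq_zero.mp (pow_eq_zero_iff hq0 |>.mp h0)

lemma ncard_le_natDegree (S : Set F) (P : Polynomial F)
    (hP : P ≠ 0) (h : ∀ x ∈ S, P.eval x = 0) : S.ncard ≤ P.natDegree := by
  classical
  have hsub : S ⊆ ↑P.roots.toFinset := by
    intro x hx
    simp only [Finset.mem_coe, Multiset.mem_toFinset, Polynomial.mem_roots hP]
    exact h x hx
  calc S.ncard ≤ (↑P.roots.toFinset : Set F).ncard :=
        Set.ncard_le_ncard hsub (P.roots.toFinset.finite_toSet)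
    _ = P.roots.toFinset.card := Set.ncard_coe_finset _
    _ ≤ Multiset.card P.roots := Multiset.toFinset_card_le _
    _ ≤ P.natDegree := Polynomial.card_roots' P

lemma pow_cycle (x : F) (hx : x ^ (8:ℕ) = x) (m : ℕ) :
    x ^ 2 ^ m = x ^ 2 ^ (m % 3) := by
  induction m using Nat.strong_induction_on with
  | _ m ih =>
    by_cases hm : m < 3
    · rw [Nat.mod_eq_of_lt hm]
    · have hm3 : m = (m - 3) + 3 := by omega
      have key : x ^ 2 ^ m = x ^ 2 ^ (m - 3) := by
        rw [hm3, pow_add, pow_mul]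
        show (x ^ 2 ^ (m-3)) ^ (8:ℕ) = x ^ 2 ^ (m-3)
        rw [← pow_mul, mul_comm, pow_mul, hx]
      rw [key, ih (m - 3) (by omega)]
      have h33 : (m - 3) % 3 = m % 3 := by omega
      rw [h33]

end Lemmas

lemma two_pow_mod7' (e : ℕ) (he3 : e % 3 ≠ 0) : 2 ^ e % 7 = 2 ∨ 2 ^ e % 7 = 4 := by
  have h : 2 ^ e % 7 = 2 ^ (e % 3) % 7 := by
    conv_lhs => rw [← Nat.div_add_mod e 3]
    rw [pow_add, pow_mul, Nat.mul_mod, Nat.pow_mod]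
    norm_num
  have h1 : e % 3 = 1 ∨ e % 3 = 2 := by omega
  rcases h1 with h1 | h1 <;> rw [h, h1] <;> norm_num

theorem singer_core (e q n : ℕ) (he : 1 ≤ e) (he3 : e % 3 ≠ 0) (hq : q = 2 ^ e)
    (hn : n = q ^ 2 + q + 1)
    (F : Type) [Field F] [Fintype F] [CharP F 2] (hcard : Fintype.card F = q ^ 3) :
    ∃ D : Set (ZMod n), IsDifferenceSet D ∧ ∃ t : ZMod n,
      t ≠ 0 ∧ 7 * t = 0 ∧ t ∈ D ∧ 2 * t ∈ D ∧ 4 * t ∈ D := by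
  classical
  have hq2 : 2 ≤ q := by
    rw [hq]
    calc 2 = 2 ^ 1 := rfl
    _ ≤ 2 ^ e := Nat.pow_le_pow_right (by norm_num) he
  have hq0 : q ≠ 0 := by omega
  have hq4 : 4 ≤ q ^ 2 := by nlinarith
  have hn7 : 7 ≤ n := by omega
  haveI : NeZero n := ⟨by omega⟩
  have hqm : 0 < q - 1 := by omega
  have horder_key : n * (q - 1) + 1 = q ^ 3 := by
    obtain ⟨m, rfl⟩ : ∃ m, q = 2 + m := ⟨q - 2, by omega⟩
    have h1 : (2 + m) - 1 = m + 1 := by omega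
    rw [hn, h1]; ring
  have horder : q ^ 3 - 1 = n * (q - 1) := by omega
  have hcardu : Fintype.card Fˣ = q ^ 3 - 1 := by rw [Fintype.card_units, hcard]
  obtain ⟨g, hg⟩ := IsCyclic.exists_generator (α := Fˣ)
  have hog : orderOf g = n * (q - 1) := by
    rw [orderOf_eq_card_of_forall_mem_zpowers hg, Nat.card_eq_fintype_card, hcardu, horder]
  have hgord1 : g ^ (n * (q - 1)) = 1 := by rw [← hog]; exact pow_orderOf_eq_one g
  have hgF : (g : F) ≠ 0 := Units.ne_zero g
  have cF : ∀ m : ℕ, ((g ^ m : Fˣ) : F) = (g : F) ^ m := fun m => Units.val_pow_eq_pow_val g m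
  -- powers of g^n are fixed by the q-power (Frobenius^e) map
  have Kpow : ∀ k : ℕ, ((g : F) ^ (n * k)) ^ q = (g : F) ^ (n * k) := by
    intro k
    have expo : n * k * q = n * (q - 1) * k + n * k := by
      obtain ⟨m, rfl⟩ : ∃ m, q = m + 1 := ⟨q - 1, by omega⟩
      have h1 : m + 1 - 1 = m := by omega
      rw [h1]; ring
    have hu : (g ^ (n * k)) ^ q = g ^ (n * k) := by
      rw [← pow_mul, expo, pow_add, pow_mul, hgord1, one_pow, one_mul]
    rw [← cF, ← Units.val_pow_eq_pow_val, hu]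
  -- well-definedness of the trace condition modulo n
  have Dwell : ∀ i i' : ℕ, i % n = i' % n →
      (Tr q ((g : F) ^ i) = 0 ↔ Tr q ((g : F) ^ i') = 0) := by
    have claim : ∀ i : ℕ, Tr q ((g : F) ^ i) = (g : F) ^ (n * (i / n)) * Tr q ((g : F) ^ (i % n)) := by
      intro i
      conv_lhs => rw [← Nat.div_add_mod i n, pow_add]
      exact Tr_smul q _ _ (Kpow (i / n))
    intro i i' h
    rw [claim i, claim i', h]
    simp [mul_eq_zero, pow_ne_zero _ hgF]
  set D : Set (ZMod n) := {d : ZMod n | Tr q ((g : F) ^ d.val) = 0} with hDdef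
  have hDmem : ∀ d : ZMod n, d ∈ D ↔ Tr q ((g : F) ^ d.val) = 0 := fun d => Iff.rfl
  -- main difference set property
  have hD : IsDifferenceSet D := by
    intro a ha
    set α : F := (g : F) ^ a.val with hαdef
    have haval : 0 < a.val := by
      rcases Nat.eq_zero_or_pos a.val with h | h
      · exact absurd ((ZMod.val_eq_zero a).mp h) ha
      · exact h
    have havlt : a.val < n := ZMod.val_lt a
    have hα0 : α ≠ 0 := pow_ne_zero _ hgF
    have hαq : α ^ q ≠ α := by
      intro hcon
      have hu : g ^ (a.val * q) = g ^ a.val := by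
        apply Units.ext
        rw [Units.val_pow_eq_pow_val, Units.val_pow_eq_pow_val]
        rw [pow_mul]; exact hcon
      have hmod := pow_eq_pow_iff_modEq.mp hu
      rw [hog] at hmod
      have hle : a.val ≤ a.val * q := Nat.le_mul_of_pos_right _ (by omega)
      have hdvd := (Nat.modEq_iff_dvd' hle).mp hmod.symm
      have hsub : a.val * q - a.val = a.val * (q - 1) := by
        obtain ⟨m, rfl⟩ : ∃ m, q = m + 1 := ⟨q - 1, by omega⟩
        have h1 : m + 1 - 1 = m := by omega
        rw [h1]; have : a.val * (m+1) = a.val * m + a.val := by ring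
        omega
      rw [hsub] at hdvd
      obtain ⟨c, hc⟩ := hdvd
      have hnc : a.val = n * c := by
        have h1 : a.val * (q-1) = (n * c) * (q-1) := by rw [hc]; ring
        exact Nat.eq_of_mul_eq_mul_right (by omega) h1
      rcases Nat.eq_zero_or_pos c with h | h
      · rw [h, Nat.mul_zero] at hnc; omega
      · have : n ≤ a.val := by
          rw [hnc]; exact Nat.le_mul_of_pos_right _ h
        omega
    -- the additive homomorphism and its kernel
    set Φ : F →+ F × F := AddMonoidHom.mk' (fun x => (Tr q x, Tr q (α * x))) (by
      intro x y
      have h1 : α * (x + y) = α * x + α * y := by ring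
      rw [h1, Tr_add e q hq, Tr_add e q hq]
      rfl) with hΦdef
    have hΦapp : ∀ x : F, Φ x = (Tr q x, Tr q (α * x)) := fun x => rfl
    set V : Set F := (Φ.ker : Set F) with hVdef
    have hVmem : ∀ x : F, x ∈ V ↔ (Tr q x = 0 ∧ Tr q (α * x) = 0) := by
      intro x
      rw [hVdef, SetLike.mem_coe, AddMonoidHom.mem_ker, hΦapp, Prod.mk_eq_zero]
    -- upper bound on #V
    have hVle : V.ncard ≤ q := by
      set R : Polynomial F := Polynomial.C (α ^ q ^ 2 - α) * Polynomial.X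
        + Polynomial.C (α ^ q ^ 2 - α ^ q) * Polynomial.X ^ q with hRdef
      have hb : α ^ q ^ 2 - α ^ q ≠ 0 := by
        intro hcon
        apply hαq
        have h1 : α ^ q ^ 2 = α ^ q := sub_eq_zero.mp hcon
        have h2 : (α ^ q) ^ q = α ^ q := by rw [← pow_mul, ← pow_two]; exact h1
        exact frob_inj e q hq _ _ h2
      have hR0 : R ≠ 0 := by
        intro hcon
        have hcoeff : R.coeff q = α ^ q ^ 2 - α ^ q := by
          rw [hRdef, Polynomial.coeff_add, Polynomial.coeff_C_mul, Polynomial.coeff_C_mul,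
            Polynomial.coeff_X_pow, Polynomial.coeff_X_of_ne_one (by omega : q ≠ 1),
            if_pos rfl]
          ring
        rw [hcon] at hcoeff
        simp at hcoeff
        exact hb hcoeff.symm
      have hRdeg : R.natDegree ≤ q := by
        apply le_trans (Polynomial.natDegree_add_le _ _)
        apply max_le
        · apply le_trans (Polynomial.natDegree_C_mul_le _ _)
          simp [Polynomial.natDegree_X]; omega
        · apply le_trans (Polynomial.natDegree_C_mul_le _ _)
          simp [Polynomial.natDegree_X_pow]
      have hroots : ∀ y ∈ V, R.eval y = 0 := by
        intro y hy
        obtain ⟨h1, h2⟩ := (hVmem y).mp hy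
        have h1' : y + y ^ q + y ^ q ^ 2 = 0 := h1
        have h2' : α * y + α ^ q * y ^ q + α ^ q ^ 2 * y ^ q ^ 2 = 0 := by
          have := h2
          simp only [Tr, mul_pow] at this
          exact this
        rw [hRdef]
        simp only [Polynomial.eval_add, Polynomial.eval_mul, Polynomial.eval_C,
          Polynomial.eval_X, Polynomial.eval_pow]
        linear_combination α ^ q ^ 2 * h1' - h2'
      exact le_trans (ncard_le_natDegree V R hR0 hroots) hRdeg
    -- lower bound on #V
    have hVge : q ≤ V.ncard := by
      set W : Set F := {c : F | c ^ q = c} with hWdef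
      have hWle : W.ncard ≤ q := by
        set P : Polynomial F := Polynomial.X ^ q - Polynomial.X with hPdef
        have hP0 : P ≠ 0 := by
          intro hcon
          have hcoeff : P.coeff q = 1 := by
            rw [hPdef, Polynomial.coeff_sub, Polynomial.coeff_X_pow,
              Polynomial.coeff_X_of_ne_one (by omega : q ≠ 1), if_pos rfl]
            ring
          rw [hcon] at hcoeff
          simp at hcoeff
        have hPdeg : P.natDegree ≤ q := by
          apply le_trans (Polynomial.natDegree_sub_le _ _)
          simp [Polynomial.natDegree_X_pow, Polynomial.natDegree_X]; omega
        have hroots : ∀ x ∈ W, P.eval x = 0 := by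
          intro x hx
          rw [hPdef]
          simp only [Polynomial.eval_sub, Polynomial.eval_pow, Polynomial.eval_X]
          rw [hx]; ring
        exact le_trans (ncard_le_natDegree W P hP0 hroots) hPdeg
      have hrange : Nat.card Φ.range ≤ q * q := by
        have hmap : ∀ x : Φ.range, ((x : F × F).1 ∈ W ∧ (x : F × F).2 ∈ W) := by
          rintro ⟨x, y, rfl⟩
          show (Φ y).1 ∈ W ∧ (Φ y).2 ∈ W
          rw [hΦapp]
          exact ⟨Tr_fixed e q hq hcard y, Tr_fixed e q hq hcard (α * y)⟩
        set jm : Φ.range → ↥W × ↥W := fun x => (⟨(x : F × F).1, (hmap x).1⟩, ⟨(x : F × F).2, (hmap x).2⟩)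
          with hjm
        have hinj : Function.Injective jm := by
          rintro x y hxy
          rw [hjm] at hxy
          simp only [Prod.mk.injEq, Subtype.mk.injEq] at hxy
          exact Subtype.ext (Prod.ext hxy.1 hxy.2)
        calc Nat.card Φ.range ≤ Nat.card (↥W × ↥W) := Nat.card_le_card_of_injective jm hinj
        _ = Nat.card ↥W * Nat.card ↥W := Nat.card_prod _ _
        _ = W.ncard * W.ncard := by rw [Nat.card_coe_set_eq]
        _ ≤ q * q := Nat.mul_le_mul hWle hWle
      have hquot := AddSubgroup.card_eq_card_quotient_mul_card_addSubgroup Φ.ker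
      have hiso : Nat.card (F ⧸ Φ.ker) = Nat.card Φ.range :=
        Nat.card_congr (QuotientAddGroup.quotientKerEquivRange Φ).toEquiv
      have hcF : Nat.card F = q ^ 3 := Nat.card_eq_fintype_card.trans hcard
      have hker : Nat.card Φ.ker = V.ncard := by
        rw [← Nat.card_coe_set_eq]; rfl
      have hineq : q * q * q ≤ q * q * V.ncard := by
        calc q * q * q = q ^ 3 := by ring
        _ = Nat.card (F ⧸ Φ.ker) * Nat.card Φ.ker := by rw [← hcF]; exact hquot
        _ = Nat.card Φ.range * V.ncard := by rw [hiso, hker]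
        _ ≤ (q * q) * V.ncard := Nat.mul_le_mul_right _ hrange
      exact Nat.le_of_mul_le_mul_left hineq (by positivity)
    have hVq : V.ncard = q := le_antisymm hVle hVge
    have h0V : (0 : F) ∈ V := by
      rw [hVmem]
      constructor
      · exact Tr_zero q hq0
      · rw [mul_zero]; exact Tr_zero q hq0
    have hVdiff : (V \ {0}).ncard = q - 1 := by
      rw [Set.ncard_diff_singleton_of_mem h0V, hVq]
    -- the K*-orbit property
    have horb : ∀ v ∈ V, v ≠ 0 → ∀ w ∈ V, w ≠ 0 → ∃ k : ℕ, w = (g : F) ^ (n * k) * v := by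
      intro v hv hv0 w hw hw0
      set f : Fin (q - 1) → ↥(V \ {0}) := fun i =>
        ⟨(g : F) ^ (n * (i : ℕ)) * v, by
          constructor
          · rw [hVmem]
            obtain ⟨h1, h2⟩ := (hVmem v).mp hv
            constructor
            · rw [Tr_smul q _ _ (Kpow (i : ℕ)), h1, mul_zero]
            · have hcomm : α * ((g : F) ^ (n * (i:ℕ)) * v) = (g : F) ^ (n * (i:ℕ)) * (α * v) := by ring
              rw [hcomm, Tr_smul q _ _ (Kpow (i : ℕ)), h2, mul_zero]
          · simp only [Set.mem_singleton_iff]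
            exact mul_ne_zero (pow_ne_zero _ hgF) hv0⟩ with hf
      have hinj : Function.Injective f := by
        intro i j hij
        rw [hf] at hij
        simp only [Subtype.mk.injEq] at hij
        have h1 : (g : F) ^ (n * (i:ℕ)) = (g : F) ^ (n * (j:ℕ)) := mul_right_cancel₀ hv0 (congrArg Subtype.val hij)
        have h2 : g ^ (n * (i:ℕ)) = g ^ (n * (j:ℕ)) := by
          apply Units.ext
          rw [Units.val_pow_eq_pow_val, Units.val_pow_eq_pow_val]
          exact h1
        have h3 := pow_eq_pow_iff_modEq.mp h2
        rw [hog] at h3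
        have h4 : n * ((i:ℕ) % (q-1)) = n * ((j:ℕ) % (q-1)) := by
          have := h3
          unfold Nat.ModEq at this
          rwa [Nat.mul_mod_mul_left, Nat.mul_mod_mul_left] at this
        have h5 : (i:ℕ) % (q-1) = (j:ℕ) % (q-1) := Nat.eq_of_mul_eq_mul_left (by omega) h4
        have hi := i.isLt
        have hj := j.isLt
        apply Fin.ext
        rwa [Nat.mod_eq_of_lt hi, Nat.mod_eq_of_lt hj] at h5
      have hbij : Function.Bijective f := by
        rw [Nat.bijective_iff_injective_and_card]
        refine ⟨hinj, ?_⟩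
        rw [Nat.card_eq_fintype_card, Fintype.card_fin, Nat.card_coe_set_eq, hVdiff]
      obtain ⟨i, hi⟩ := hbij.2 ⟨w, hw, by simpa using hw0⟩
      refine ⟨(i : ℕ), ?_⟩
      have := congrArg Subtype.val hi
      rw [hf] at this
      exact this.symm
    -- construct the canonical solution
    have hVne : (V \ {0}).Nonempty := by
      apply Set.nonempty_of_ncard_ne_zero
      rw [hVdiff]; omega
    obtain ⟨v0, hv0V, hv0ne⟩ := hVne
    have hv00 : v0 ≠ 0 := by simpa using hv0ne
    obtain ⟨j, hj⟩ := Submonoid.mem_powers_iff _ _ |>.mp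
      (mem_powers_iff_mem_zpowers.mpr (hg (Units.mk0 v0 hv00)))
    have hgj : (g : F) ^ j = v0 := by
      rw [← cF, hj]; rfl
    set d : ZMod n := ((j : ℕ) : ZMod n) with hd
    have hdval : d.val = j % n := ZMod.val_natCast n j
    obtain ⟨hTv0, hTαv0⟩ := (hVmem v0).mp hv0V
    have hmem1 : d ∈ D := by
      rw [hDmem]
      rw [Dwell d.val j (by rw [hdval, Nat.mod_mod_of_dvd _ dvd_rfl])]
      rw [hgj]; exact hTv0
    have hmem2 : d + a ∈ D := by
      rw [hDmem]
      have hmodeq : (d + a).val % n = (a.val + j) % n := by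
        rw [ZMod.val_add, Nat.mod_mod_of_dvd _ dvd_rfl, hdval]
        conv_rhs => rw [Nat.add_comm]
        exact Nat.ModEq.add_right a.val (Nat.mod_modEq j n)
      rw [Dwell _ (a.val + j) hmodeq, pow_add, hgj]
      exact hTαv0
    -- membership criterion gives V-membership
    have hmemV : ∀ b : ZMod n, b ∈ D → b + a ∈ D → ((g : F) ^ b.val ∈ V ∧ (g : F) ^ b.val ≠ 0) := by
      intro b hb hba
      refine ⟨?_, pow_ne_zero _ hgF⟩
      rw [hVmem]
      constructor
      · exact (hDmem b).mp hb
      · have h2 := (hDmem _).mp hba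
        have hmodeq : (b + a).val % n = (a.val + b.val) % n := by
          rw [ZMod.val_add, Nat.mod_mod_of_dvd _ dvd_rfl, Nat.add_comm]
        rw [Dwell _ (a.val + b.val) hmodeq, pow_add] at h2
        exact h2
    -- uniqueness
    refine ⟨(d + a, d), ⟨hmem2, hmem1, add_sub_cancel_left d a⟩, ?_⟩
    rintro ⟨p1, p2⟩ ⟨hp1, hp2, hp3⟩
    have hp1eq : p1 = p2 + a := by linear_combination hp3
    have hp2D : p2 + a ∈ D := by rw [← hp1eq]; exact hp1
    obtain ⟨hwV, hw0⟩ := hmemV p2 hp2 hp2D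
    obtain ⟨k, hk⟩ := horb v0 ((hVmem v0).mpr ⟨hTv0, hTαv0⟩) hv00 _ hwV hw0
    have huk : g ^ p2.val = g ^ (n * k + j) := by
      apply Units.ext
      rw [Units.val_pow_eq_pow_val, Units.val_pow_eq_pow_val, pow_add, hgj]
      exact hk
    have hmodeq := pow_eq_pow_iff_modEq.mp huk
    rw [hog] at hmodeq
    have hmodn : p2.val % n = (n * k + j) % n :=
      Nat.ModEq.of_dvd (dvd_mul_right n (q - 1)) hmodeq
    have hp2d : p2 = d := by
      apply ZMod.val_injective
      rw [hdval]
      rw [Nat.mod_eq_of_lt (ZMod.val_lt p2)] at hmodn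
      rw [hmodn, Nat.mul_add_mod]
    rw [Prod.mk.injEq]
    exact ⟨by rw [hp1eq, hp2d, add_comm], hp2d⟩
  -- now the order-7 element
  have hq3mod : q ^ 3 % 7 = 1 := by
    have h8 : q ^ 3 = 8 ^ e := by
      rw [hq, ← pow_mul, show (8:ℕ) = 2 ^ 3 from rfl, ← pow_mul, Nat.mul_comm]
    rw [h8, Nat.pow_mod]; norm_num
  have hq3ge : 8 ≤ q ^ 3 := by
    calc (8:ℕ) = 2 ^ 3 := rfl
    _ ≤ q ^ 3 := Nat.pow_le_pow_left hq2 3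
  have h7dvd : 7 ∣ q ^ 3 - 1 := by omega
  set M : ℕ := (q ^ 3 - 1) / 7 with hM
  have hM0 : M ≠ 0 := by
    rw [hM]; have : 7 ≤ q ^ 3 - 1 := by omega
    omega
  set γu : Fˣ := g ^ M with hγu
  have hMdvd : M ∣ q ^ 3 - 1 := Nat.div_dvd_of_dvd h7dvd
  have hordγ : orderOf γu = 7 := by
    rw [hγu, orderOf_pow' g hM0, hog, ← horder, Nat.gcd_eq_right hMdvd, hM]
    exact Nat.div_div_self h7dvd (by omega)
  have hγu7 : γu ^ (7:ℕ) = 1 := by rw [← hordγ]; exact pow_orderOf_eq_one γu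
  set γ : F := (γu : F) with hγ
  have hγ7 : γ ^ (7:ℕ) = 1 := by rw [hγ, ← Units.val_pow_eq_pow_val, hγu7]; rfl
  have hγ1 : γ ≠ 1 := by
    intro hcon
    have : γu = 1 := Units.ext (by rw [← hγ] at *; exact hcon)
    rw [this] at hordγ
    simp at hordγ
  have h2F : (2 : F) = 0 := by exact_mod_cast CharP.cast_eq_zero F 2
  have hsum : γ^6 + γ^5 + γ^4 + γ^3 + γ^2 + γ + 1 = 0 := by
    have hfac : (γ - 1) * (γ^6 + γ^5 + γ^4 + γ^3 + γ^2 + γ + 1) = γ^7 - 1 := by ring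
    have h0 : (γ - 1) * (γ^6 + γ^5 + γ^4 + γ^3 + γ^2 + γ + 1) = 0 := by
      rw [hfac, hγ7, sub_self]
    rcases mul_eq_zero.mp h0 with h | h
    · exact absurd h (sub_ne_zero.mpr hγ1)
    · exact h
  have hprod : (γ^3 + γ + 1) * (γ^3 + γ^2 + 1) = 0 := by
    linear_combination hsum + γ^3 * h2F
  -- get a root of x^3 + x + 1 of order dividing 7
  obtain ⟨δu, hδu7, hδroot⟩ : ∃ δu : Fˣ, δu ^ (7:ℕ) = 1 ∧
      ((δu : F))^3 + (δu : F) + 1 = 0 := by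
    rcases mul_eq_zero.mp hprod with h | h
    · exact ⟨γu, hγu7, h⟩
    · refine ⟨γu ^ (6:ℕ), by rw [← pow_mul, mul_comm, pow_mul, hγu7, one_pow], ?_⟩
      have hc : ((γu ^ (6:ℕ) : Fˣ) : F) = γ ^ (6:ℕ) := by rw [Units.val_pow_eq_pow_val]
      rw [hc]
      linear_combination γ^4 * h + (γ^4 * (γ^7 + 1) - 1) * hγ7
  set δ : F := (δu : F) with hδ
  have hδ7 : δ ^ (7:ℕ) = 1 := by rw [hδ, ← Units.val_pow_eq_pow_val, hδu7]; rfl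
  have hδ8 : δ ^ (8:ℕ) = δ := by
    rw [show (8:ℕ) = 7 + 1 from rfl, pow_add, hδ7, one_mul, pow_one]
  obtain ⟨s, hs⟩ := Submonoid.mem_powers_iff _ _ |>.mp
    (mem_powers_iff_mem_zpowers.mpr (hg δu))
  have hgs : (g : F) ^ s = δ := by rw [← cF, hs]
  set t : ZMod n := ((s : ℕ) : ZMod n) with ht
  -- 7 * t = 0
  have h7t : 7 * t = 0 := by
    have hgu : g ^ (7 * s) = 1 := by rw [mul_comm, pow_mul, hs, hδu7]
    have hdvd : n ∣ 7 * s := dvd_trans (dvd_mul_right n (q-1))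
      (by rw [← hog]; exact orderOf_dvd_of_pow_eq_one hgu)
    have h0 : ((7 * s : ℕ) : ZMod n) = 0 := (ZMod.natCast_eq_zero_iff _ _).mpr hdvd
    push_cast at h0
    rw [ht]; exact_mod_cast h0
  -- ¬ 7 ∣ q - 1
  have hq7 : q % 7 = 2 ∨ q % 7 = 4 := by
    rw [hq]
    exact two_pow_mod7' e he3
  have hnq7 : ¬ (7 ∣ q - 1) := by omega
  -- t ≠ 0
  have ht0 : t ≠ 0 := by
    intro hcon
    have hdvd : n ∣ s := (ZMod.natCast_eq_zero_iff _ _).mp (by rw [← ht]; exact hcon)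
    obtain ⟨c, hc⟩ := hdvd
    have hδuq : δu ^ (q - 1) = 1 := by
      rw [← hs, hc, ← pow_mul]
      have : n * c * (q - 1) = (n * (q-1)) * c := by ring
      rw [this, pow_mul, hgord1, one_pow]
    have hord7 : orderOf δu ∣ 7 := orderOf_dvd_of_pow_eq_one hδu7
    have hordq : orderOf δu ∣ q - 1 := orderOf_dvd_of_pow_eq_one hδuq
    rcases (Nat.Prime.eq_one_or_self_of_dvd (by norm_num) _ hord7) with h | h
    · have hδu1 : δu = 1 := orderOf_eq_one_iff.mp h
      have hδ1 : δ = 1 := by rw [hδ, hδu1]; rfl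
      rw [hδ1] at hδroot
      have : (1 : F) = 0 := by linear_combination hδroot - h2F
      exact one_ne_zero this
    · rw [h] at hordq
      exact hnq7 hordq
  -- memberships
  have hT8 : ∀ x : F, x ^ (8:ℕ) = x → Tr q x = x + x^2 + x^4 := by
    intro x hx
    have hxq : x ^ q = x ^ 2 ^ (e % 3) := by rw [hq]; exact pow_cycle x hx e
    have hxq2 : x ^ q ^ 2 = x ^ 2 ^ ((e * 2) % 3) := by
      have h : q ^ 2 = 2 ^ (e * 2) := by rw [hq, ← pow_mul]
      rw [h]; exact pow_cycle x hx (e * 2)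
    have he' : e % 3 = 1 ∨ e % 3 = 2 := by omega
    rcases he' with h | h
    · have h2 : (e * 2) % 3 = 2 := by omega
      rw [Tr, hxq, hxq2, h, h2]; norm_num
    · have h2 : (e * 2) % 3 = 1 := by omega
      rw [Tr, hxq, hxq2, h, h2]; norm_num; ring
  have hmemk : ∀ k : ℕ, Tr q (δ ^ k) = 0 → ((s * k : ℕ) : ZMod n) ∈ D := by
    intro k hk
    rw [hDmem]
    have hval : (((s * k : ℕ) : ZMod n)).val % n = (s * k) % n := by
      rw [ZMod.val_natCast]; exact Nat.mod_mod_of_dvd _ dvd_rfl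
    rw [Dwell _ (s * k) hval, pow_mul, hgs]
    exact hk
  have hTδ1 : Tr q (δ ^ 1) = 0 := by
    rw [pow_one, hT8 δ hδ8]
    linear_combination δ * hδroot
  have hTδ2 : Tr q (δ ^ 2) = 0 := by
    have h28 : (δ^2) ^ (8:ℕ) = δ^2 := by rw [← pow_mul, mul_comm, pow_mul, hδ8]
    rw [hT8 _ h28]
    linear_combination δ * hδroot + hδ8
  have hTδ4 : Tr q (δ ^ 4) = 0 := by
    have h48 : (δ^4) ^ (8:ℕ) = δ^4 := by rw [← pow_mul, mul_comm, pow_mul, hδ8]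
    rw [hT8 _ h48]
    linear_combination δ * hδroot + hδ8 + (δ^8 + δ) * hδ8
  have hm1 := hmemk 1 hTδ1
  have hm2 := hmemk 2 hTδ2
  have hm4 := hmemk 4 hTδ4
  refine ⟨D, hD, t, ht0, h7t, ?_, ?_, ?_⟩
  · have : ((s * 1 : ℕ) : ZMod n) = t := by push_cast; ring
    rwa [this] at hm1
  · have : ((s * 2 : ℕ) : ZMod n) = 2 * t := by push_cast; ring
    rwa [this] at hm2
  · have : ((s * 4 : ℕ) : ZMod n) = 4 * t := by push_cast; ring
    rwa [this] at hm4

end SingerAux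

lemma IsDifferenceSet.translate {m : ℕ} {D : Set (ZMod m)} (hD : IsDifferenceSet D)
    (c : ZMod m) : IsDifferenceSet {x : ZMod m | x + c ∈ D} := by
  intro a ha
  obtain ⟨p, ⟨h1, h2, h3⟩, hu⟩ := hD a ha
  refine ⟨(p.1 - c, p.2 - c), ⟨?_, ?_, by simp; linear_combination h3⟩, ?_⟩
  · show p.1 - c + c ∈ D
    rwa [sub_add_cancel]
  · show p.2 - c + c ∈ D
    rwa [sub_add_cancel]
  · rintro ⟨x, y⟩ ⟨hx, hy, hxy⟩
    have h' := hu (x + c, y + c) ⟨hx, hy, by linear_combination hxy⟩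
    have h1' : x + c = p.1 := congrArg Prod.fst h'
    have h2' : y + c = p.2 := congrArg Prod.snd h'
    simp only [Prod.mk.injEq]
    constructor <;> [linear_combination h1'; linear_combination h2']

lemma IsDifferenceSet.neg {m : ℕ} {D : Set (ZMod m)} (hD : IsDifferenceSet D) :
    IsDifferenceSet {x : ZMod m | -x ∈ D} := by
  intro a ha
  obtain ⟨p, ⟨h1, h2, h3⟩, hu⟩ := hD a ha
  refine ⟨(-p.2, -p.1), ⟨by simpa using h2, by simpa using h1, by linear_combination h3⟩, ?_⟩
  rintro ⟨x, y⟩ ⟨hx, hy, hxy⟩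
  have h' := hu (-y, -x) ⟨hy, hx, by linear_combination hxy⟩
  have h1' : -y = p.1 := congrArg Prod.fst h'
  have h2' : -x = p.2 := congrArg Prod.snd h'
  simp only [Prod.mk.injEq]
  constructor <;> [linear_combination -h2'; linear_combination -h1']

namespace SingerAsm2

lemma assemble (n : ℕ) [NeZero n] (hn7 : 7 ∣ n) (hge : 7 ≤ n)
    (D : Set (ZMod n)) (hD : IsDifferenceSet D) (t : ZMod n)
    (ht0 : t ≠ 0) (h7t : 7 * t = 0) (ht1 : t ∈ D) (ht2 : 2 * t ∈ D) (ht4 : 4 * t ∈ D) :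
    ∃ E : Set (ZMod n), IsDifferenceSet E ∧
      ((0 : ZMod n) ∈ E ∧ ((n / 7 : ℕ) : ZMod n) ∈ E ∧ ((3 * n / 7 : ℕ) : ZMod n) ∈ E) := by
  set h : ZMod n := ((n / 7 : ℕ) : ZMod n) with hh
  have hn77 : 7 * (n / 7) = n := Nat.mul_div_cancel' hn7
  have h7h : 7 * h = 0 := by
    have h0 : ((7 * (n / 7) : ℕ) : ZMod n) = 0 := by
      rw [hn77]; exact ZMod.natCast_self n
    push_cast at h0
    rw [hh]; exact_mod_cast h0
  have h3n : ((3 * n / 7 : ℕ) : ZMod n) = 3 * h := by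
    have h0 : (3 * n / 7 : ℕ) = 3 * (n / 7) := Nat.mul_div_assoc 3 hn7
    rw [h0]; push_cast; rw [hh]
  have hvt : ((t.val : ℕ) : ZMod n) = t := ZMod.natCast_rightInverse t
  have hdvd7 : (n / 7) ∣ t.val := by
    have h70 : ((7 * t.val : ℕ) : ZMod n) = 0 := by
      push_cast [hvt]
      exact_mod_cast h7t
    have hn7t : n ∣ 7 * t.val := (ZMod.natCast_eq_zero_iff _ _).mp h70
    exact (Nat.mul_dvd_mul_iff_left (by norm_num : (0:ℕ) < 7)).mp
      (by rw [hn77]; exact hn7t)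
  obtain ⟨u, htu⟩ := hdvd7
  have hn70 : 0 < n / 7 := Nat.div_pos hge (by norm_num)
  have hult : u < 7 := by
    by_contra h'
    push_neg at h'
    have h1 : n / 7 * 7 ≤ n / 7 * u := Nat.mul_le_mul_left _ h'
    have h2 : n / 7 * 7 = n := Nat.div_mul_cancel hn7
    have := ZMod.val_lt t
    omega
  have hu0 : u ≠ 0 := by
    intro h'
    rw [h', Nat.mul_zero] at htu
    exact ht0 ((ZMod.val_eq_zero t).mp htu)
  have htuh : t = (u : ZMod n) * h := by
    rw [← hvt, htu]; push_cast; rw [hh]; ring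
  have hred : ∀ a b : ℕ, a % 7 = b % 7 → (a : ZMod n) * h = (b : ZMod n) * h := by
    have key : ∀ c : ℕ, (c : ZMod n) * h = ((c % 7 : ℕ) : ZMod n) * h := by
      intro c
      conv_lhs => rw [← Nat.div_add_mod c 7]
      push_cast
      linear_combination ((c / 7 : ℕ) : ZMod n) * h7h
    intro a b hab
    rw [key a, key b, hab]
  have hmem : ∀ k : ℕ, (k % 7 = u % 7 ∨ k % 7 = (2*u) % 7 ∨ k % 7 = (4*u) % 7) →
      ((k : ℕ) : ZMod n) * h ∈ D := by
    intro k hk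
    rcases hk with hk | hk | hk
    · rw [hred k u hk, ← htuh]; exact ht1
    · rw [hred k (2*u) hk]
      have h0 : ((2*u : ℕ) : ZMod n) * h = 2 * t := by rw [htuh]; push_cast; ring
      rw [h0]; exact ht2
    · rw [hred k (4*u) hk]
      have h0 : ((4*u : ℕ) : ZMod n) * h = 4 * t := by rw [htuh]; push_cast; ring
      rw [h0]; exact ht4
  have hmemneg : ∀ k m : ℕ, (k + m) % 7 = 0 → ((m : ℕ) : ZMod n) * h ∈ D →
      -(((k : ℕ) : ZMod n) * h) ∈ D := by
    intro k m hkm hm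
    have h0 : ((k + m : ℕ) : ZMod n) * h = ((0:ℕ) : ZMod n) * h := hred _ 0 (by omega)
    have h1 : -(((k : ℕ) : ZMod n) * h) = ((m : ℕ) : ZMod n) * h := by
      push_cast at h0
      linear_combination -h0
    rwa [h1]
  have hc0 : (0 : ZMod n) + h = ((1:ℕ) : ZMod n) * h := by push_cast; ring
  have hc1 : h + h = ((2:ℕ) : ZMod n) * h := by push_cast; ring
  have hc3 : 3 * h + h = ((4:ℕ) : ZMod n) * h := by push_cast; ring
  have hcase : (u = 1 ∨ u = 2 ∨ u = 4) ∨ (u = 3 ∨ u = 5 ∨ u = 6) := by omega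
  rcases hcase with hres | hnres
  · refine ⟨{x : ZMod n | x + h ∈ D}, hD.translate h, ?_, ?_, ?_⟩
    · show (0 : ZMod n) + h ∈ D
      rw [hc0]
      exact hmem 1 (by omega)
    · show h + h ∈ D
      rw [hc1]
      exact hmem 2 (by omega)
    · rw [h3n]
      show 3 * h + h ∈ D
      rw [hc3]
      exact hmem 4 (by omega)
  · refine ⟨{x : ZMod n | -(x + h) ∈ D}, hD.neg.translate h, ?_, ?_, ?_⟩
    · show -((0 : ZMod n) + h) ∈ D
      rw [hc0]
      exact hmemneg 1 6 (by norm_num)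
        (hmem 6 (by omega))
    · show -(h + h) ∈ D
      rw [hc1]
      exact hmemneg 2 5 (by norm_num)
        (hmem 5 (by omega))
    · rw [h3n]
      show -(3 * h + h) ∈ D
      rw [hc3]
      exact hmemneg 4 3 (by norm_num)
        (hmem 3 (by omega))

end SingerAsm2


/-- Let `q = 2^e` with `e ≥ 1` and `e ≢ 0 (mod 3)`, and `n = q² + q + 1`.  Then `7 ∣ n`
and there is a difference set `D ⊆ ℤ/nℤ` containing `0`, `n/7` and `3n/7`. -/
theorem exists_difference_set_containing_zero_nDiv7_threeNDiv7
    (e q n : ℕ) (he : 1 ≤ e) (he3 : e % 3 ≠ 0) (hq : q = 2 ^ e) (hn : n = q ^ 2 + q + 1) :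
    7 ∣ n ∧
    ∃ D : Set (ZMod n), IsDifferenceSet D ∧
      ((0 : ZMod n) ∈ D ∧ ((n / 7 : ℕ) : ZMod n) ∈ D ∧ ((3 * n / 7 : ℕ) : ZMod n) ∈ D) := by
  have hq2 : 2 ≤ q := by
    rw [hq]
    calc 2 = 2 ^ 1 := rfl
    _ ≤ 2 ^ e := Nat.pow_le_pow_right (by norm_num) he
  have hq4 : 4 ≤ q ^ 2 := by nlinarith
  have hge : 7 ≤ n := by omega
  haveI : NeZero n := ⟨by omega⟩
  have hmod : q % 7 = 2 ∨ q % 7 = 4 := by rw [hq]; exact SingerAux.two_pow_mod7' e he3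
  have h7n : 7 ∣ n := by
    have h2 := Nat.pow_mod q 2 7
    rcases hmod with h | h <;> rw [h] at h2 <;> omega
  refine ⟨h7n, ?_⟩
  haveI : Fact (Nat.Prime 2) := ⟨Nat.prime_two⟩
  set F := GaloisField 2 (3 * e) with hF
  haveI : Fintype F := Fintype.ofFinite F
  have hcard : Fintype.card F = q ^ 3 := by
    have h0 := GaloisField.card 2 (3 * e) (by omega)
    rw [Nat.card_eq_fintype_card] at h0
    rw [h0, hq, ← pow_mul, Nat.mul_comm]
  obtain ⟨D, hD, t, ht0, h7t, h1, h2, h4⟩ :=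
    SingerAux.singer_core e q n he he3 hq hn F hcard
  exact SingerAsm2.assemble n h7n hge D hD t ht0 h7t h1 h2 h4
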